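/- arXiv:1007.3172 — 2 statements merged into one kernel-verified Lean document; each statement's English description precedes it below -/
import Mathlib

section
/- Let u : ℝ⁴ → ℝ be biradial with u = φ(r1, r2). Then for x with r1, r2 > 0, the directional derivative ∇u · X2 equals w(r1,r2)·sin(θ1+θ2) and ∇u · X3 equals -w(r1,r2)·cos(θ1+θ2), where w(r1,r2) = (∂φ/∂r1)·r2 - (∂φ/∂r2)·r1 and θ1, θ2 are the polar angles of (x1,x2) and (x3,x4) respectively. -/
open Real

def X2 (x : Fin 4 → ℝ) : Fin 4 → ℝ := ![x 3, x 2, -x 1, -x 0]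
def X3 (x : Fin 4 → ℝ) : Fin 4 → ℝ := ![-x 2, x 3, x 0, -x 1]

lemma pair_decomp (L : ℝ × ℝ →L[ℝ] ℝ) (a b : ℝ) :
    L (a, b) = a * L (1, 0) + b * L (0, 1) := by
  have h : (a, b) = a • ((1:ℝ), (0:ℝ)) + b • ((0:ℝ), (1:ℝ)) := by
    simp [Prod.ext_iff]
  rw [h, map_add, map_smul, map_smul, smul_eq_mul, smul_eq_mul]

set_option maxHeartbeats 1000000 in
/-- For a biradial `u = φ(r₁, r₂)` on ℝ⁴, at a point with polar coordinates
`(r₁, θ₁, r₂, θ₂)` with `r₁, r₂ > 0`, the directional derivatives along X2, X3 are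
`w·sin(θ₁+θ₂)` and `-w·cos(θ₁+θ₂)`, where `w = (∂φ/∂r₁)·r₂ - (∂φ/∂r₂)·r₁`. -/
theorem biradial_deriv_X2_X3 (φ : ℝ × ℝ → ℝ) (hφ : ContDiff ℝ 1 φ)
    (u : (Fin 4 → ℝ) → ℝ)
    (hu : ∀ x : Fin 4 → ℝ,
      u x = φ (Real.sqrt ((x 0) ^ 2 + (x 1) ^ 2), Real.sqrt ((x 2) ^ 2 + (x 3) ^ 2)))
    (r₁ r₂ θ₁ θ₂ : ℝ) (hr₁ : 0 < r₁) (hr₂ : 0 < r₂)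
    (x : Fin 4 → ℝ)
    (hx : x = ![r₁ * cos θ₁, r₁ * sin θ₁, r₂ * cos θ₂, r₂ * sin θ₂])
    (w : ℝ)
    (hw : w = fderiv ℝ φ (r₁, r₂) (1, 0) * r₂ - fderiv ℝ φ (r₁, r₂) (0, 1) * r₁) :
    fderiv ℝ u x (X2 x) = w * sin (θ₁ + θ₂) ∧
      fderiv ℝ u x (X3 x) = -(w * cos (θ₁ + θ₂)) := by
  have e0 : x 0 = r₁ * Real.cos θ₁ := by rw [hx]; norm_num
  have e1 : x 1 = r₁ * Real.sin θ₁ := by rw [hx]; norm_num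
  have e2 : x 2 = r₂ * Real.cos θ₂ := by rw [hx]; rfl
  have e3 : x 3 = r₂ * Real.sin θ₂ := by rw [hx]; rfl
  have q1 : (x 0) ^ 2 + (x 1) ^ 2 = r₁ ^ 2 := by
    rw [e0, e1]; nlinarith [Real.sin_sq_add_cos_sq θ₁]
  have q2 : (x 2) ^ 2 + (x 3) ^ 2 = r₂ ^ 2 := by
    rw [e2, e3]; nlinarith [Real.sin_sq_add_cos_sq θ₂]
  have s1 : Real.sqrt ((x 0) ^ 2 + (x 1) ^ 2) = r₁ := by
    rw [q1, Real.sqrt_sq hr₁.le]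
  have s2 : Real.sqrt ((x 2) ^ 2 + (x 3) ^ 2) = r₂ := by
    rw [q2, Real.sqrt_sq hr₂.le]
  have hp0 : HasFDerivAt (fun y : Fin 4 → ℝ => y 0)
      (ContinuousLinearMap.proj (R := ℝ) (φ := fun _ : Fin 4 => ℝ) 0) x :=
    (ContinuousLinearMap.proj (R := ℝ) (φ := fun _ : Fin 4 => ℝ) 0).hasFDerivAt
  have hp1 : HasFDerivAt (fun y : Fin 4 → ℝ => y 1)
      (ContinuousLinearMap.proj (R := ℝ) (φ := fun _ : Fin 4 => ℝ) 1) x :=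
    (ContinuousLinearMap.proj (R := ℝ) (φ := fun _ : Fin 4 => ℝ) 1).hasFDerivAt
  have hp2 : HasFDerivAt (fun y : Fin 4 → ℝ => y 2)
      (ContinuousLinearMap.proj (R := ℝ) (φ := fun _ : Fin 4 => ℝ) 2) x :=
    (ContinuousLinearMap.proj (R := ℝ) (φ := fun _ : Fin 4 => ℝ) 2).hasFDerivAt
  have hp3 : HasFDerivAt (fun y : Fin 4 → ℝ => y 3)
      (ContinuousLinearMap.proj (R := ℝ) (φ := fun _ : Fin 4 => ℝ) 3) x :=
    (ContinuousLinearMap.proj (R := ℝ) (φ := fun _ : Fin 4 => ℝ) 3).hasFDerivAt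
  have hq1 : HasFDerivAt (fun y : Fin 4 → ℝ => (y 0) ^ 2 + (y 1) ^ 2)
      ((x 0 • (ContinuousLinearMap.proj 0 : (Fin 4 → ℝ) →L[ℝ] ℝ) + x 0 • (ContinuousLinearMap.proj 0 : (Fin 4 → ℝ) →L[ℝ] ℝ)) +
        (x 1 • (ContinuousLinearMap.proj 1 : (Fin 4 → ℝ) →L[ℝ] ℝ) + x 1 • (ContinuousLinearMap.proj 1 : (Fin 4 → ℝ) →L[ℝ] ℝ))) x := by
    simp only [pow_two]; exact (hp0.mul hp0).add (hp1.mul hp1)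
  have hq2 : HasFDerivAt (fun y : Fin 4 → ℝ => (y 2) ^ 2 + (y 3) ^ 2)
      ((x 2 • (ContinuousLinearMap.proj 2 : (Fin 4 → ℝ) →L[ℝ] ℝ) + x 2 • (ContinuousLinearMap.proj 2 : (Fin 4 → ℝ) →L[ℝ] ℝ)) +
        (x 3 • (ContinuousLinearMap.proj 3 : (Fin 4 → ℝ) →L[ℝ] ℝ) + x 3 • (ContinuousLinearMap.proj 3 : (Fin 4 → ℝ) →L[ℝ] ℝ))) x := by
    simp only [pow_two]; exact (hp2.mul hp2).add (hp3.mul hp3)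
  have hne1 : (x 0) ^ 2 + (x 1) ^ 2 ≠ 0 := by rw [q1]; positivity
  have hne2 : (x 2) ^ 2 + (x 3) ^ 2 ≠ 0 := by rw [q2]; positivity
  have hs1 := hq1.sqrt hne1
  have hs2 := hq2.sqrt hne2
  have hg := HasFDerivAt.prodMk hs1 hs2
  have hφ' : HasFDerivAt φ (fderiv ℝ φ (r₁, r₂))
      (Real.sqrt ((x 0) ^ 2 + (x 1) ^ 2), Real.sqrt ((x 2) ^ 2 + (x 3) ^ 2)) := by
    rw [s1, s2]
    exact ((hφ.differentiable one_ne_zero) _).hasFDerivAt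
  have hucomp : HasFDerivAt u ((fderiv ℝ φ (r₁, r₂)).comp
      (((1 / (2 * Real.sqrt ((x 0) ^ 2 + (x 1) ^ 2))) •
          ((x 0 • (ContinuousLinearMap.proj 0 : (Fin 4 → ℝ) →L[ℝ] ℝ) +
            x 0 • (ContinuousLinearMap.proj 0 : (Fin 4 → ℝ) →L[ℝ] ℝ)) +
           (x 1 • (ContinuousLinearMap.proj 1 : (Fin 4 → ℝ) →L[ℝ] ℝ) +
            x 1 • (ContinuousLinearMap.proj 1 : (Fin 4 → ℝ) →L[ℝ] ℝ)))).prod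
       ((1 / (2 * Real.sqrt ((x 2) ^ 2 + (x 3) ^ 2))) •
          ((x 2 • (ContinuousLinearMap.proj 2 : (Fin 4 → ℝ) →L[ℝ] ℝ) +
            x 2 • (ContinuousLinearMap.proj 2 : (Fin 4 → ℝ) →L[ℝ] ℝ)) +
           (x 3 • (ContinuousLinearMap.proj 3 : (Fin 4 → ℝ) →L[ℝ] ℝ) +
            x 3 • (ContinuousLinearMap.proj 3 : (Fin 4 → ℝ) →L[ℝ] ℝ)))))) x := by
    have hue : u = fun y : Fin 4 → ℝ =>
        φ (Real.sqrt ((y 0) ^ 2 + (y 1) ^ 2), Real.sqrt ((y 2) ^ 2 + (y 3) ^ 2)) :=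
      funext hu
    rw [hue]
    exact hφ'.comp x hg
  rw [hucomp.fderiv]
  have hr₁' : r₁ ≠ 0 := hr₁.ne'
  have hr₂' : r₂ ≠ 0 := hr₂.ne'
  clear hp0 hp1 hp2 hp3 hq1 hq2 hs1 hs2 hg hφ' hucomp hne1 hne2 hu hφ hx s1 s2
  constructor
  · show (fderiv ℝ φ (r₁, r₂)) _ = _
    simp only [ContinuousLinearMap.coe_coe, ContinuousLinearMap.prod_apply, ContinuousLinearMap.add_apply,
      ContinuousLinearMap.smul_apply, ContinuousLinearMap.proj_apply, smul_eq_mul,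
      q1, q2, Real.sqrt_sq hr₁.le, Real.sqrt_sq hr₂.le, X2,
      Matrix.cons_val_zero, Matrix.cons_val_one, Matrix.head_cons,
      Matrix.cons_val_two, Matrix.tail_cons, Matrix.cons_val_three]
    rw [pair_decomp]
    rw [hw, e0, e1, e2, e3, Real.sin_add]
    field_simp
    ring
  · show (fderiv ℝ φ (r₁, r₂)) _ = _
    simp only [ContinuousLinearMap.coe_coe, ContinuousLinearMap.prod_apply, ContinuousLinearMap.add_apply,
      ContinuousLinearMap.smul_apply, ContinuousLinearMap.proj_apply, smul_eq_mul,
      q1, q2, Real.sqrt_sq hr₁.le, Real.sqrt_sq hr₂.le, X3,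
      Matrix.cons_val_zero, Matrix.cons_val_one, Matrix.head_cons,
      Matrix.cons_val_two, Matrix.tail_cons, Matrix.cons_val_three]
    rw [pair_decomp]
    rw [hw, e0, e1, e2, e3, Real.cos_add]
    field_simp
    ring
end

section
/- For any α, β, γ ∈ ℝ with α = cos γ and β = sin γ, one has ∇(θ1+θ2) · (α X2 + β X3) = (r2/r1 - r1/r2)·cos(θ1 + θ2 - γ) away from {r1=0} ∪ {r2=0}. -/
open Real

def dot (a b : Fin 4 → ℝ) : ℝ := ∑ i, a i * b i

/-- For `α = cos γ`, `β = sin γ`, away from {r₁=0} ∪ {r₂=0}: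
`∇(θ₁+θ₂) · (α X2 + β X3) = (r₂/r₁ - r₁/r₂)·cos(θ₁+θ₂-γ)`. -/
theorem angle_sum_deriv (α β γ r₁ r₂ θ₁ θ₂ : ℝ)
    (hα : α = cos γ) (hβ : β = sin γ)
    (hr₁ : 0 < r₁) (hr₂ : 0 < r₂)
    (x : Fin 4 → ℝ)
    (hx : x = ![r₁ * cos θ₁, r₁ * sin θ₁, r₂ * cos θ₂, r₂ * sin θ₂])
    (gradθ₁ gradθ₂ : Fin 4 → ℝ)
    (hg₁ : gradθ₁ = ![-(x 1) / r₁ ^ 2, x 0 / r₁ ^ 2, 0, 0])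
    (hg₂ : gradθ₂ = ![0, 0, -(x 3) / r₂ ^ 2, x 2 / r₂ ^ 2]) :
    dot (fun i => gradθ₁ i + gradθ₂ i) (fun i => α * X2 x i + β * X3 x i) =
      (r₂ / r₁ - r₁ / r₂) * cos (θ₁ + θ₂ - γ) := by
  subst hα hβ hx hg₁ hg₂
  simp only [dot, X2, X3, Fin.sum_univ_four, Matrix.cons_val_zero, Matrix.cons_val_one,
    Matrix.head_cons, Matrix.cons_val_two, Matrix.tail_cons, Matrix.cons_val_three]
  rw [cos_sub, cos_add, sin_add]
  have h1 := sin_sq_add_cos_sq θ₁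
  have h2 := sin_sq_add_cos_sq θ₂
  field_simp
  nlinarith [sq_nonneg r₁, sq_nonneg r₂, mul_pos hr₁ hr₂, h1, h2, sq_nonneg (sin θ₁), sq_nonneg (cos θ₁)]
end
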